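/- arXiv:2601.19245 — 2 statements merged into one kernel-verified Lean document; each statement's English description precedes it below -/
import Mathlib

section
/- Let X, Y be independent nonnegative random variables with means m_X, m_Y > 0 and standard deviations σ_X, σ_Y. Define δ = m_X/m_Y, r = σ_X/σ_Y, c = σ_Y/m_Y. If δ > 2, 1 < r ≤ 2.5, and c ≤ 0.1·t for some t > 0, then P(X > Y) ≥ 1/(1 + 0.0725·t²). -/
open MeasureTheory ProbabilityTheory

set_option maxHeartbeats 1000000

/-- Cantelli's inequality. -/
lemma cantelli {Ω : Type*} [MeasurableSpace Ω] (P : Measure Ω) [IsProbabilityMeasure P]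
    (Z : Ω → ℝ) (hZ : MemLp Z 2 P) {lam : ℝ} (hlam : 0 < lam) :
    (P {ω | Z ω - P[Z] ≤ -lam}).toReal ≤ variance Z P / (variance Z P + lam ^ 2) := by
  set V := variance Z P with hV
  have hV0 : 0 ≤ V := variance_nonneg _ _
  set u : ℝ := V / lam with hu
  have hu0 : 0 ≤ u := div_nonneg hV0 hlam.le
  set f : Ω → ℝ := fun ω => (u - (Z ω - P[Z])) ^ 2 with hf
  have hWm : MemLp (fun ω => u - (Z ω - P[Z])) 2 P := by
    exact (memLp_const u).sub (hZ.sub (memLp_const _))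
  have hfint : Integrable f P := hWm.integrable_sq
  have hZint : Integrable Z P := hZ.integrable one_le_two
  have hZ1 : Integrable (fun ω => Z ω - P[Z]) P := hZint.sub (integrable_const _)
  have hZ2 : Integrable (fun ω => (Z ω - P[Z]) ^ 2) P := (hZ.sub (memLp_const _)).integrable_sq
  have hintf : ∫ ω, f ω ∂P = V + u ^ 2 := by
    have h0 : ∫ ω, (Z ω - P[Z]) ∂P = 0 := by
      rw [integral_sub hZint (integrable_const _), integral_const]
      simp
    have hexp : f = fun ω => (Z ω - P[Z]) ^ 2 - (2 * u) * (Z ω - P[Z]) + u ^ 2 := by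
      funext ω; simp only [hf]; ring
    have hZ3 : Integrable (fun ω => (Z ω - P[Z]) ^ 2 - 2 * u * (Z ω - P[Z])) P :=
      hZ2.sub (hZ1.const_mul _)
    rw [hexp]
    rw [integral_add hZ3 (integrable_const _),
      integral_sub hZ2 (hZ1.const_mul _), integral_const_mul, h0, integral_const]
    rw [variance_eq_integral hZ.aestronglyMeasurable.aemeasurable] at hV
    simp [hV]
  have hsub : {ω | Z ω - P[Z] ≤ -lam} ⊆ {ω | (u + lam) ^ 2 ≤ f ω} := by
    intro ω hω
    simp only [Set.mem_setOf_eq] at hω ⊢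
    have h1 : u + lam ≤ u - (Z ω - P[Z]) := by linarith
    have h2 : 0 < u + lam := by linarith
    calc (u + lam) ^ 2 ≤ (u - (Z ω - P[Z])) ^ 2 := by nlinarith
    _ = f ω := rfl
  have hmarkov := mul_meas_ge_le_integral_of_nonneg
    (Filter.Eventually.of_forall (fun ω => sq_nonneg _ : ∀ ω, 0 ≤ f ω)) hfint ((u + lam) ^ 2)
  have hmono : (P {ω | Z ω - P[Z] ≤ -lam}).toReal ≤ (P {ω | (u + lam) ^ 2 ≤ f ω}).toReal := by
    exact ENNReal.toReal_mono (measure_ne_top _ _) (measure_mono hsub)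
  have hpos : 0 < (u + lam) ^ 2 := by positivity
  have key : (P {ω | Z ω - P[Z] ≤ -lam}).toReal ≤ (V + u ^ 2) / (u + lam) ^ 2 := by
    rw [le_div_iff₀ hpos]
    calc (P {ω | Z ω - P[Z] ≤ -lam}).toReal * (u + lam) ^ 2
        ≤ (P {ω | (u + lam) ^ 2 ≤ f ω}).toReal * (u + lam) ^ 2 := by
          exact mul_le_mul_of_nonneg_right hmono hpos.le
      _ ≤ ∫ ω, f ω ∂P := by rw [mul_comm]; exact hmarkov
      _ = V + u ^ 2 := hintf
  refine key.trans (le_of_eq ?_)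
  rw [hu]
  field_simp
  ring

theorem stmt2 {Ω : Type*} [MeasurableSpace Ω] (P : Measure Ω) [IsProbabilityMeasure P]
    (X Y : Ω → ℝ) (hX : MemLp X 2 P) (hY : MemLp Y 2 P)
    (hXnn : ∀ ω, 0 ≤ X ω) (hYnn : ∀ ω, 0 ≤ Y ω)
    (hind : IndepFun X Y P)
    (mX mY σX σY δ r c t : ℝ)
    (hmX : mX = P[X]) (hmY : mY = P[Y]) (hmXpos : 0 < mX) (hmYpos : 0 < mY)
    (hσX : σX = Real.sqrt (variance X P)) (hσY : σY = Real.sqrt (variance Y P))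
    (hδ : δ = mX / mY) (hr : r = σX / σY) (hc : c = σY / mY)
    (hδ2 : 2 < δ) (hr1 : 1 < r) (hr25 : r ≤ 2.5)
    (ht : 0 < t) (hct : c ≤ 0.1 * t) :
    (P {ω | X ω > Y ω}).toReal ≥ 1 / (1 + 0.0725 * t ^ 2) := by
  -- basic positivity facts
  have hσXnn : 0 ≤ σX := hσX ▸ Real.sqrt_nonneg _
  have hσYnn : 0 ≤ σY := hσY ▸ Real.sqrt_nonneg _
  have hσYpos : 0 < σY := by
    rcases hσYnn.lt_or_eq with h | h
    · exact h
    · exfalso; rw [hr, ← h, div_zero] at hr1; linarith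
  have hVX : variance X P = σX ^ 2 := by
    rw [hσX, Real.sq_sqrt (variance_nonneg _ _)]
  have hVY : variance Y P = σY ^ 2 := by
    rw [hσY, Real.sq_sqrt (variance_nonneg _ _)]
  -- Z = X - Y
  set Z : Ω → ℝ := fun ω => X ω - Y ω with hZdef
  have hZ : MemLp Z 2 P := hX.sub hY
  have hEZ : P[Z] = mX - mY := by
    rw [hZdef, integral_sub (hX.integrable one_le_two) (hY.integrable one_le_two), hmX, hmY]
  set m : ℝ := mX - mY with hm
  have hmpos : 0 < m := by
    have : 2 * mY < mX := by
      rw [hδ, lt_div_iff₀ hmYpos] at hδ2; linarith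
    simp only [hm]; linarith
  have hmYm : mY ≤ m := by
    have : 2 * mY < mX := by
      rw [hδ, lt_div_iff₀ hmYpos] at hδ2; linarith
    simp only [hm]; linarith
  -- variance of Z
  have hVZ : variance Z P = σX ^ 2 + σY ^ 2 := by
    have hnegY : MemLp (fun ω => -1 * Y ω) 2 P := by
      exact hY.const_mul (-1)
    have hindn : IndepFun X (fun ω => -1 * Y ω) P := hind.comp measurable_id (by fun_prop)
    have h1 : variance (fun ω => X ω + -1 * Y ω) P
        = variance X P + variance (fun ω => -1 * Y ω) P :=
      hindn.variance_add hX hnegY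
    have h2 : variance (fun ω => -1 * Y ω) P = variance Y P := by
      rw [variance_const_mul]; norm_num
    have h3 : Z = fun ω => X ω + -1 * Y ω := by funext ω; simp [hZdef]; ring
    rw [h3, h1, h2, hVX, hVY]
  have hVZnn : 0 ≤ variance Z P := variance_nonneg _ _
  -- Cantelli
  have hcant := cantelli P Z hZ hmpos
  -- identify the event
  have hsetA : {ω | Z ω - P[Z] ≤ -m} = {ω | X ω ≤ Y ω} := by
    ext ω; simp only [Set.mem_setOf_eq, hEZ, hZdef]
    constructor <;> intro h <;> [linarith; linarith]
  rw [hsetA] at hcant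
  -- complement
  have hnm : NullMeasurableSet {ω | X ω ≤ Y ω} P := by
    have : {ω | X ω ≤ Y ω} = Z ⁻¹' (Set.Iic 0) := by
      ext ω; simp [hZdef, sub_nonpos]
    rw [this]
    exact (hZ.aestronglyMeasurable.aemeasurable).nullMeasurable measurableSet_Iic
  have hcompl : P {ω | X ω > Y ω} = 1 - P {ω | X ω ≤ Y ω} := by
    have : {ω | X ω ≤ Y ω}ᶜ = {ω | X ω > Y ω} := by
      ext ω; simp [not_le]
    rw [← this, prob_compl_eq_one_sub₀ hnm]
  have htr : (P {ω | X ω > Y ω}).toReal = 1 - (P {ω | X ω ≤ Y ω}).toReal := by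
    rw [hcompl, ENNReal.toReal_sub_of_le prob_le_one ENNReal.one_ne_top, ENNReal.toReal_one]
  -- key variance bound
  have hσXr : σX = r * σY := by rw [hr]; field_simp
  have hσYc : σY = c * mY := by rw [hc]; field_simp
  have hc0 : 0 ≤ c := by rw [hc]; positivity
  have hkey : variance Z P ≤ 0.0725 * t ^ 2 * m ^ 2 := by
    rw [hVZ]
    have hr0 : (0:ℝ) ≤ r := by linarith
    have hr2 : r ^ 2 ≤ 6.25 := by nlinarith [mul_le_mul hr25 hr25 hr0 (by norm_num : (0:ℝ) ≤ 2.5)]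
    have h1 : σX ^ 2 ≤ 6.25 * σY ^ 2 := by
      have : σX ^ 2 = r ^ 2 * σY ^ 2 := by rw [hσXr]; ring
      rw [this]
      exact mul_le_mul_of_nonneg_right hr2 (sq_nonneg _)
    have hc2 : c ^ 2 ≤ 0.01 * t ^ 2 := by nlinarith [mul_le_mul hct hct hc0 (by positivity : (0:ℝ) ≤ 0.1 * t)]
    have h2 : σY ^ 2 ≤ 0.01 * t ^ 2 * mY ^ 2 := by
      have : σY ^ 2 = c ^ 2 * mY ^ 2 := by rw [hσYc]; ring
      rw [this]
      exact mul_le_mul_of_nonneg_right hc2 (sq_nonneg _)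
    have h3 : mY ^ 2 ≤ m ^ 2 := pow_le_pow_left₀ hmYpos.le hmYm 2
    have h4 : 0.0725 * t ^ 2 * mY ^ 2 ≤ 0.0725 * t ^ 2 * m ^ 2 :=
      mul_le_mul_of_nonneg_left h3 (by positivity)
    linarith
  -- final arithmetic
  set V := variance Z P
  set D : ℝ := 1 + 0.0725 * t ^ 2 with hD
  have hDpos : 0 < D := by positivity
  have hEpos : 0 < V + m ^ 2 := by positivity
  have hq : (P {ω | X ω ≤ Y ω}).toReal ≤ 0.0725 * t ^ 2 / D := by
    refine hcant.trans ?_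
    rw [div_le_div_iff₀ hEpos hDpos]
    have e1 : V * D = V + 0.0725 * t ^ 2 * V := by rw [hD]; ring
    have e2 : 0.0725 * t ^ 2 * (V + m ^ 2) = 0.0725 * t ^ 2 * V + 0.0725 * t ^ 2 * m ^ 2 := by
      ring
    rw [e1, e2]
    linarith [hkey]
  have hsum : 0.0725 * t ^ 2 / D + 1 / D = 1 := by
    field_simp
    rw [hD]; ring
  rw [htr, ge_iff_le]
  linarith
end

section
/- Let Y be a nonnegative random variable with mean m > 0 and standard deviation σ, and suppose the coefficient of variation σ/m ≤ 0.2. Let X be independent of Y with E[X] > 2m and σ_X ≤ 2.5σ. Then P(X > Y) ≥ 1/1.29. -/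
open MeasureTheory ProbabilityTheory

/-- Cantelli's inequality (one-sided Chebyshev). -/
lemma cantelli_aux {Ω : Type*} [MeasurableSpace Ω] (P : Measure Ω) [IsProbabilityMeasure P]
    (Z : Ω → ℝ) (hZ : MemLp Z 2 P) {t : ℝ} (ht : 0 < t) :
    (P {ω | Z ω ≤ P[Z] - t}).toReal ≤ variance Z P / (variance Z P + t ^ 2) := by
  set v := variance Z P with hv
  set μ := P[Z] with hμ
  have hv0 : 0 ≤ v := variance_nonneg _ _
  set u : ℝ := v / t with hu
  have hu0 : 0 ≤ u := div_nonneg hv0 ht.le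
  set c : ℝ := μ + u with hc
  have hW_int : Integrable (fun ω => (c - Z ω) ^ 2) P := by
    have h : (fun ω => (c - Z ω) ^ 2) = fun ω => Z ω ^ 2 - 2 * c * Z ω + c ^ 2 := by
      funext ω; ring
    rw [h]
    exact ((hZ.integrable_sq).sub ((hZ.integrable one_le_two).const_mul _)).add
      (integrable_const _)
  have hEZ2 : ∫ ω, Z ω ^ 2 ∂P = v + μ ^ 2 := by
    have := variance_eq_sub hZ
    simp only [Pi.pow_apply] at this
    rw [hv, this]; ring
  have hWval : ∫ ω, (c - Z ω) ^ 2 ∂P = v + u ^ 2 := by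
    have h : (fun ω => (c - Z ω) ^ 2) = fun ω => Z ω ^ 2 - 2 * c * Z ω + c ^ 2 := by
      funext ω; ring
    rw [h, integral_add, integral_sub, integral_const_mul, hEZ2, integral_const]
    · simp only [smul_eq_mul, probReal_univ, ← hμ, measure_univ, ENNReal.toReal_one, one_mul, hc, hu]
      field_simp
      ring
    · exact hZ.integrable_sq
    · exact (hZ.integrable one_le_two).const_mul _
    · exact hZ.integrable_sq.sub ((hZ.integrable one_le_two).const_mul _)
    · exact integrable_const _
  have key := mul_meas_ge_le_integral_of_nonneg
    (Filter.Eventually.of_forall fun ω => sq_nonneg (c - Z ω)) hW_int ((t + u) ^ 2)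
  rw [hWval] at key
  have hsub : {ω | Z ω ≤ μ - t} ⊆ {ω | (t + u) ^ 2 ≤ (c - Z ω) ^ 2} := by
    intro ω hω
    simp only [Set.mem_setOf_eq] at hω ⊢
    have h1 : t + u ≤ c - Z ω := by rw [hc]; linarith
    exact pow_le_pow_left₀ (by positivity) h1 2
  have hmono : (P {ω | Z ω ≤ μ - t}).toReal ≤
      (P {ω | (t + u) ^ 2 ≤ (c - Z ω) ^ 2}).toReal :=
    ENNReal.toReal_mono (measure_ne_top _ _) (measure_mono hsub)
  have htu : (0:ℝ) < (t + u) ^ 2 := by positivity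
  have hstep : (P {ω | Z ω ≤ μ - t}).toReal ≤ (v + u ^ 2) / (t + u) ^ 2 := by
    rw [le_div_iff₀ htu]
    calc (P {ω | Z ω ≤ μ - t}).toReal * (t + u) ^ 2
        ≤ (P {ω | (t + u) ^ 2 ≤ (c - Z ω) ^ 2}).toReal * (t + u) ^ 2 := by
          exact mul_le_mul_of_nonneg_right hmono htu.le
      _ ≤ v + u ^ 2 := by rw [measureReal_def] at key; linarith [key]
  have heq : (v + u ^ 2) / (t + u) ^ 2 = v / (v + t ^ 2) := by
    rw [hu]
    field_simp
    ring
  rw [← heq]; exact hstep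

theorem stmt6 {Ω : Type*} [MeasurableSpace Ω] (P : Measure Ω) [IsProbabilityMeasure P]
    (X Y : Ω → ℝ) (hX : MemLp X 2 P) (hY : MemLp Y 2 P)
    (hYnn : ∀ ω, 0 ≤ Y ω) (hind : IndepFun X Y P)
    (m σ : ℝ) (hm : m = P[Y]) (hmpos : 0 < m)
    (hσ : σ = Real.sqrt (variance Y P)) (hcv : σ / m ≤ 0.2)
    (hEX : P[X] > 2 * m) (hσX : Real.sqrt (variance X P) ≤ 2.5 * σ) :
    (P {ω | X ω > Y ω}).toReal ≥ 1 / 1.29 := by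
  set Z : Ω → ℝ := fun ω => X ω - Y ω with hZdef
  have hZ : MemLp Z 2 P := hX.sub hY
  have hμZ : P[Z] = P[X] - m := by
    rw [hm]
    exact integral_sub (hX.integrable one_le_two) (hY.integrable one_le_two)
  have hvZ : variance Z P = variance X P + variance Y P := by
    have h1 : Z = X + (-Y) := by funext ω; simp [hZdef, sub_eq_add_neg]
    have h2 : variance (-Y) P = variance Y P := by
      have : (-Y) = fun ω => (-1 : ℝ) * Y ω := by funext ω; simp
      rw [this, variance_const_mul]; norm_num
    rw [h1, IndepFun.variance_add hX hY.neg hind.neg_right, h2]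
  set t : ℝ := P[X] - m with htdef
  have ht : 0 < t := by rw [htdef]; linarith
  have htm : m ≤ t := by rw [htdef]; linarith
  have hcant := cantelli_aux P Z hZ ht
  -- bounds on the variance
  have hσ0 : 0 ≤ σ := hσ ▸ Real.sqrt_nonneg _
  have hσm : σ ≤ 0.2 * m := by rw [div_le_iff₀ hmpos] at hcv; linarith
  have hvY : variance Y P = σ ^ 2 := by
    rw [hσ, Real.sq_sqrt (variance_nonneg _ _)]
  have hvX : variance X P ≤ 6.25 * σ ^ 2 := by
    have h1 : variance X P = (Real.sqrt (variance X P)) ^ 2 :=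
      (Real.sq_sqrt (variance_nonneg _ _)).symm
    rw [h1]
    nlinarith [Real.sqrt_nonneg (variance X P)]
  have hv0 : 0 ≤ variance Z P := variance_nonneg _ _
  have hvle : variance Z P ≤ 0.29 * m ^ 2 := by
    rw [hvZ, hvY]
    nlinarith
  have hbound : variance Z P / (variance Z P + t ^ 2) ≤ 0.29 / 1.29 := by
    rw [div_le_div_iff₀ (by positivity) (by norm_num)]
    nlinarith
  have hBle : (P {ω | Z ω ≤ P[Z] - t}).toReal ≤ 0.29 / 1.29 := le_trans hcant hbound
  have hset : {ω | Z ω ≤ P[Z] - t} = {ω | X ω ≤ Y ω} := by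
    ext ω
    simp only [Set.mem_setOf_eq, hμZ, hZdef]
    constructor <;> intro h <;> linarith
  rw [hset] at hBle
  -- cover the space
  have hcover : (1 : ENNReal) ≤ P {ω | X ω > Y ω} + P {ω | X ω ≤ Y ω} := by
    have hU : (Set.univ : Set Ω) ⊆ {ω | X ω > Y ω} ∪ {ω | X ω ≤ Y ω} := by
      intro ω _
      rcases le_or_gt (X ω) (Y ω) with h | h
      · exact Or.inr h
      · exact Or.inl h
    calc (1 : ENNReal) = P Set.univ := (measure_univ).symm
      _ ≤ P ({ω | X ω > Y ω} ∪ {ω | X ω ≤ Y ω}) := measure_mono hU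
      _ ≤ _ := measure_union_le _ _
  have hfin : P {ω | X ω > Y ω} + P {ω | X ω ≤ Y ω} ≠ ⊤ := by
    exact ENNReal.add_ne_top.mpr ⟨measure_ne_top _ _, measure_ne_top _ _⟩
  have hcr : (1 : ℝ) ≤ (P {ω | X ω > Y ω}).toReal + (P {ω | X ω ≤ Y ω}).toReal := by
    have := ENNReal.toReal_mono hfin hcover
    rwa [ENNReal.toReal_one, ENNReal.toReal_add (measure_ne_top _ _) (measure_ne_top _ _)]
      at this
  have : (1 : ℝ) / 1.29 = 1 - 0.29 / 1.29 := by norm_num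
  rw [this]
  linarith
end
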